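/- Fix T > 0 and (t,x) ∈ [0,T]×ℝ^d. Let b : ℝ^d → ℝ^d and σ : ℝ^d → ℝ^{d×d} be continuous with a(y) = σ(y)σ(y)ᵀ symmetric positive definite for every y, and let h : ℝ^d → ℝ. Suppose G : [0,T]×ℝ^d → ℝ is continuously differentiable and satisfies exactly the Hamilton–Jacobi–Bellman equation G_t(s,y) + ⟨b(y), ∇_x G(s,y)⟩ − (1/2)‖σ(y)ᵀ∇_x G(s,y)‖² = 0 on [0,T)×ℝ^d with G(T,y) = h(y). Set ū(s,y) := −σ(y)ᵀ∇_x G(s,y). Then for every absolutely continuous path φ : [t,T] → ℝ^d with φ(t) = x and square-integrable derivative, ∫_t^T [ (1/2)‖φ̇(s) − (b(φ(s)) − σ(φ(s))ū(s,φ(s)))‖²_{a^{-1}(φ(s))} − ‖ū(s,φ(s))‖² ] ds + 2h(φ(T)) = S_{tT}(φ) + h(φ(T)) + G(t,x), where S_{tT}(φ) = ∫_t^T (1/2)‖φ̇(s) − b(φ(s))‖²_{a^{-1}(φ(s))} ds. Consequently, if in addition G(t,x) = inf { S_{tT}(φ) + h(φ(T)) : φ ∈ AC([t,T];ℝ^d),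 φ(t) = x }, then the infimum over such φ of the left-hand side equals 2G(t,x). -/

import Mathlib

open Real Filter MeasureTheory Matrix intervalIntegral Set
open scoped BigOperators

noncomputable section

/-- Partial derivative of `f : ℝ^d → ℝ` in the `i`-th coordinate direction. -/
noncomputable def pder {d : ℕ} (i : Fin d) (f : (Fin d → ℝ) → ℝ) (x : Fin d → ℝ) : ℝ :=
  fderiv ℝ f x (Pi.single i 1)

/-- Spatial gradient `∇_x f`. -/
noncomputable def gradv {d : ℕ} (f : (Fin d → ℝ) → ℝ) (x : Fin d → ℝ) : Fin d → ℝ :=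
  fun i => pder i f x

/-- Spatial Hessian `∇²_x f`. -/
noncomputable def hessm {d : ℕ} (f : (Fin d → ℝ) → ℝ) (x : Fin d → ℝ) :
    Matrix (Fin d) (Fin d) ℝ :=
  Matrix.of fun i j => pder i (fun y => pder j f y) x

/-- Euclidean inner product on `ℝ^d`. -/
def dotp {d : ℕ} (u v : Fin d → ℝ) : ℝ := ∑ i, u i * v i

/-- Matrix contraction `A : B = ∑_{i,j} A_{ij} B_{ij}`. -/
def mdot {d : ℕ} (A B : Matrix (Fin d) (Fin d) ℝ) : ℝ := ∑ i, ∑ j, A i j * B i j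

/-- `f(t,x)` is of class `C^{1,2}` on `ℝ × ℝ^d`: continuous, continuously
differentiable in `t` and twice continuously differentiable in `x`. -/
def C12 {d : ℕ} (f : ℝ → (Fin d → ℝ) → ℝ) : Prop :=
  Continuous (fun p : ℝ × (Fin d → ℝ) => f p.1 p.2) ∧
  (∀ x, Differentiable ℝ (fun s => f s x)) ∧
  Continuous (fun p : ℝ × (Fin d → ℝ) => deriv (fun s => f s p.2) p.1) ∧
  (∀ t, ContDiff ℝ 2 (f t)) ∧
  (∀ i, Continuous (fun p : ℝ × (Fin d → ℝ) => pder i (f p.1) p.2)) ∧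
  (∀ i j, Continuous (fun p : ℝ × (Fin d → ℝ) => hessm (f p.1) p.2 i j))

/-- `f(t,x)` is of class `C^1` on `ℝ × ℝ^d`. -/
def C1 {d : ℕ} (f : ℝ → (Fin d → ℝ) → ℝ) : Prop :=
  Continuous (fun p : ℝ × (Fin d → ℝ) => f p.1 p.2) ∧
  (∀ x, Differentiable ℝ (fun s => f s x)) ∧
  Continuous (fun p : ℝ × (Fin d → ℝ) => deriv (fun s => f s p.2) p.1) ∧
  (∀ t, Differentiable ℝ (f t)) ∧
  (∀ i, Continuous (fun p : ℝ × (Fin d → ℝ) => pder i (f p.1) p.2))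


open Topology

section Helpers

variable {d : ℕ}

lemma dotp_comm (u v : Fin d → ℝ) : dotp u v = dotp v u := by
  simp [dotp, mul_comm]

lemma dotp_sub_left (u v w : Fin d → ℝ) : dotp (u - v) w = dotp u w - dotp v w := by
  simp [dotp, sub_mul, Finset.sum_sub_distrib]

lemma dotp_sub_right (u v w : Fin d → ℝ) : dotp u (v - w) = dotp u v - dotp u w := by
  simp [dotp, mul_sub, Finset.sum_sub_distrib]

lemma dotp_neg_neg (u v : Fin d → ℝ) : dotp (-u) (-v) = dotp u v := by
  simp [dotp]

lemma dotp_mulVec_left (M : Matrix (Fin d) (Fin d) ℝ) (v w : Fin d → ℝ) :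
    dotp (M *ᵥ v) w = dotp v (Mᵀ *ᵥ w) := by
  simp only [dotp, Matrix.mulVec, dotProduct, Matrix.transpose_apply,
    Finset.sum_mul, Finset.mul_sum]
  rw [Finset.sum_comm]
  congr 1; ext i; congr 1; ext j; ring

lemma abs_dotp_le (u v : Fin d → ℝ) : |dotp u v| ≤ d * ‖u‖ * ‖v‖ := by
  calc |dotp u v| ≤ ∑ i, |u i * v i| := Finset.abs_sum_le_sum_abs _ _
    _ ≤ ∑ _i : Fin d, ‖u‖ * ‖v‖ := by
        refine Finset.sum_le_sum fun i _ => ?_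
        rw [abs_mul]
        have h1 : |u i| ≤ ‖u‖ := by
          simpa [Real.norm_eq_abs] using norm_le_pi_norm u i
        have h2 : |v i| ≤ ‖v‖ := by
          simpa [Real.norm_eq_abs] using norm_le_pi_norm v i
        exact mul_le_mul h1 h2 (abs_nonneg _) (norm_nonneg _)
    _ = d * ‖u‖ * ‖v‖ := by simp [Finset.sum_const, mul_assoc]

lemma sq_norm_le_dotp (u : Fin d → ℝ) : ‖u‖ ^ 2 ≤ dotp u u := by
  rcases isEmpty_or_nonempty (Fin d) with hd | hd
  · simp [dotp, Subsingleton.elim u 0]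
  obtain ⟨i, hi⟩ := Finite.exists_max fun i => |u i|
  have hnorm : ‖u‖ = |u i| := by
    apply le_antisymm
    · apply (pi_norm_le_iff_of_nonneg (abs_nonneg _)).2
      intro j; simpa [Real.norm_eq_abs] using hi j
    · simpa [Real.norm_eq_abs] using norm_le_pi_norm u i
  rw [hnorm]
  calc |u i| ^ 2 = u i * u i := by rw [sq_abs]; ring
    _ ≤ ∑ j, u j * u j :=
        Finset.single_le_sum (f := fun j => u j * u j) (fun j _ => mul_self_nonneg _)
          (Finset.mem_univ i)
    _ = dotp u u := rfl

lemma dotp_nonneg_self (u : Fin d → ℝ) : 0 ≤ dotp u u :=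
  Finset.sum_nonneg fun i _ => mul_self_nonneg _

lemma abs_dotp_mulVec_le (N : Matrix (Fin d) (Fin d) ℝ) (w : Fin d → ℝ) :
    |dotp w (N *ᵥ w)| ≤ (∑ i, ∑ j, |N i j|) * ‖w‖ ^ 2 := by
  have hw : ∀ i, |w i| ≤ ‖w‖ := fun i => by
    simpa [Real.norm_eq_abs] using norm_le_pi_norm w i
  calc |dotp w (N *ᵥ w)| ≤ ∑ i, |w i * (N *ᵥ w) i| := Finset.abs_sum_le_sum_abs _ _
    _ ≤ ∑ i, (∑ j, |N i j|) * ‖w‖ ^ 2 := by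
        refine Finset.sum_le_sum fun i _ => ?_
        rw [abs_mul]
        have h1 : |(N *ᵥ w) i| ≤ (∑ j, |N i j|) * ‖w‖ := by
          calc |(N *ᵥ w) i| = |∑ j, N i j * w j| := rfl
            _ ≤ ∑ j, |N i j * w j| := Finset.abs_sum_le_sum_abs _ _
            _ ≤ ∑ j, |N i j| * ‖w‖ := by
                refine Finset.sum_le_sum fun j _ => ?_
                rw [abs_mul]
                exact mul_le_mul_of_nonneg_left (hw j) (abs_nonneg _)
            _ = (∑ j, |N i j|) * ‖w‖ := by rw [Finset.sum_mul]
        calc |w i| * |(N *ᵥ w) i| ≤ ‖w‖ * ((∑ j, |N i j|) * ‖w‖) :=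
              mul_le_mul (hw i) h1 (abs_nonneg _) (norm_nonneg _)
          _ = (∑ j, |N i j|) * ‖w‖ ^ 2 := by ring
    _ = (∑ i, ∑ j, |N i j|) * ‖w‖ ^ 2 := by rw [Finset.sum_mul]

lemma fderiv_eq_dotp {f : (Fin d → ℝ) → ℝ} {y : Fin d → ℝ} (v : Fin d → ℝ) :
    fderiv ℝ f y v = dotp (gradv f y) v := by
  have hv : v = ∑ i, v i • (Pi.single i (1:ℝ) : Fin d → ℝ) := by
    ext j
    simp [Pi.single_apply, Finset.sum_apply, eq_comm]
  conv_lhs => rw [hv]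
  rw [map_sum]
  simp only [_root_.map_smul]
  simp [dotp, gradv, pder, mul_comm, smul_eq_mul]

lemma key_alg (A : Matrix (Fin d) (Fin d) ℝ) (hA : (A * Aᵀ).PosDef)
    (p w : Fin d → ℝ) :
    (1/2) * dotp (w - (A*Aᵀ) *ᵥ p) ((A*Aᵀ)⁻¹ *ᵥ (w - (A*Aᵀ) *ᵥ p))
      - dotp (Aᵀ *ᵥ p) (Aᵀ *ᵥ p)
    = (1/2) * dotp w ((A*Aᵀ)⁻¹ *ᵥ w) - dotp w p
      - (1/2) * dotp (Aᵀ *ᵥ p) (Aᵀ *ᵥ p) := by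
  set a := A * Aᵀ with ha
  have hdet : IsUnit a.det := isUnit_iff_ne_zero.2 (ne_of_gt hA.det_pos)
  have hsymm : aᵀ = a := by
    rw [ha, Matrix.transpose_mul, Matrix.transpose_transpose]
  have h1 : a⁻¹ *ᵥ (a *ᵥ p) = p := by
    rw [Matrix.mulVec_mulVec, Matrix.nonsing_inv_mul _ hdet, Matrix.one_mulVec]
  have h2 : dotp (a *ᵥ p) (a⁻¹ *ᵥ w) = dotp p w := by
    rw [dotp_mulVec_left, hsymm, Matrix.mulVec_mulVec, Matrix.mul_nonsing_inv _ hdet,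
      Matrix.one_mulVec]
  have h3 : dotp (a *ᵥ p) p = dotp (Aᵀ *ᵥ p) (Aᵀ *ᵥ p) := by
    rw [ha, ← Matrix.mulVec_mulVec, dotp_mulVec_left]
  rw [Matrix.mulVec_sub, dotp_sub_left, dotp_sub_right, dotp_sub_right, h1, h2,
    dotp_comm p w]
  rw [h3]
  ring

lemma hasDerivAt_comp_curve
    {G : ℝ → (Fin d → ℝ) → ℝ}
    (hDt : ∀ y, Differentiable ℝ (fun s => G s y))
    (hDtC : Continuous (fun p : ℝ × (Fin d → ℝ) => deriv (fun s => G s p.2) p.1))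
    (hDx : ∀ s, Differentiable ℝ (G s))
    {φ : ℝ → (Fin d → ℝ)} {u₀ : Fin d → ℝ} {s₀ : ℝ}
    (hφ : HasDerivAt φ u₀ s₀) :
    HasDerivAt (fun s => G s (φ s))
      (deriv (fun r => G r (φ s₀)) s₀ + dotp (gradv (G s₀) (φ s₀)) u₀) s₀ := by
  set Gt : ℝ × (Fin d → ℝ) → ℝ := fun p => deriv (fun s => G s p.2) p.1 with hGt
  set Lt : ℝ := Gt (s₀, φ s₀) with hLt
  have h2 : HasDerivAt (fun s => G s₀ (φ s)) (dotp (gradv (G s₀) (φ s₀)) u₀) s₀ := by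
    have hF : HasFDerivAt (G s₀) (fderiv ℝ (G s₀) (φ s₀)) (φ s₀) :=
      ((hDx s₀) (φ s₀)).hasFDerivAt
    have := hF.comp_hasDerivAt s₀ hφ
    rwa [fderiv_eq_dotp] at this
  have h1 : HasDerivAt (fun s => G s (φ s) - G s₀ (φ s)) Lt s₀ := by
    rw [hasDerivAt_iff_isLittleO]
    rw [Asymptotics.isLittleO_iff]
    intro ε hε
    have hcont : ContinuousAt Gt (s₀, φ s₀) := hDtC.continuousAt
    rcases Metric.continuousAt_iff.1 hcont ε hε with ⟨δ', hδ', hball⟩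
    have hφc : ContinuousAt φ s₀ := hφ.continuousAt
    rcases Metric.continuousAt_iff.1 hφc δ' hδ' with ⟨δ₂, hδ₂, hφball⟩
    rw [Metric.eventually_nhds_iff]
    refine ⟨min δ' δ₂, lt_min hδ' hδ₂, fun r hr => ?_⟩
    have hrδ' : dist r s₀ < δ' := lt_of_lt_of_le hr (min_le_left _ _)
    have hrδ₂ : dist r s₀ < δ₂ := lt_of_lt_of_le hr (min_le_right _ _)
    have hφr : dist (φ r) (φ s₀) < δ' := hφball hrδ₂
    have hint : ∀ ρ₁ ρ₂ : ℝ, IntervalIntegrable (fun ρ => Gt (ρ, φ r)) volume ρ₁ ρ₂ := by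
      intro ρ₁ ρ₂
      exact (hDtC.comp (continuous_id.prodMk continuous_const)).intervalIntegrable ρ₁ ρ₂
    have hH : G r (φ r) - G s₀ (φ r) = ∫ ρ in s₀..r, Gt (ρ, φ r) := by
      rw [intervalIntegral.integral_eq_sub_of_hasDerivAt
        (f := fun ρ => G ρ (φ r)) (fun ρ _ => ((hDt (φ r)) ρ).hasDerivAt) (hint s₀ r)]
    have hi2 : ∫ ρ in s₀..r, (Gt (ρ, φ r) - Lt) = (G r (φ r) - G s₀ (φ r)) - (r - s₀) • Lt := by
      rw [intervalIntegral.integral_sub (hint s₀ r) intervalIntegrable_const,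
        intervalIntegral.integral_const, ← hH]
    have hbound : ∀ ρ ∈ Set.uIoc s₀ r, ‖Gt (ρ, φ r) - Lt‖ ≤ ε := by
      intro ρ hρ
      have hρd : dist ρ s₀ ≤ dist r s₀ := by
        rw [Set.uIoc] at hρ
        rcases hρ with ⟨h1', h2'⟩
        rw [Real.dist_eq, Real.dist_eq]
        rcases le_total r s₀ with hc | hc
        · have : min s₀ r = r := by simp [min_eq_right hc]
          rw [this] at h1'
          have : max s₀ r = s₀ := by simp [max_eq_left hc]
          rw [this] at h2'
          rw [abs_sub_comm ρ s₀, abs_sub_comm r s₀]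
          rw [abs_of_nonneg (by linarith), abs_of_nonneg (by linarith)]
          linarith
        · have : min s₀ r = s₀ := by simp [min_eq_left hc]
          rw [this] at h1'
          have : max s₀ r = r := by simp [max_eq_right hc]
          rw [this] at h2'
          rw [abs_of_nonneg (by linarith), abs_of_nonneg (by linarith)]
          linarith
      have : dist (ρ, φ r) (s₀, φ s₀) < δ' := by
        rw [Prod.dist_eq]
        exact max_lt (lt_of_le_of_lt hρd hrδ') hφr
      exact le_of_lt (hball this)
    have hnorm := intervalIntegral.norm_integral_le_of_norm_le_const hbound
    rw [hi2] at hnorm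
    calc ‖G r (φ r) - G s₀ (φ r) - (G s₀ (φ s₀) - G s₀ (φ s₀)) - (r - s₀) • Lt‖
        = ‖(G r (φ r) - G s₀ (φ r)) - (r - s₀) • Lt‖ := by ring_nf
      _ ≤ ε * |r - s₀| := hnorm
      _ = ε * ‖r - s₀‖ := by rw [Real.norm_eq_abs]
  have := h1.add h2
  exact this.congr_of_eventuallyEq (Filter.Eventually.of_forall fun s => by
    simp only [Pi.add_apply]; ring)

lemma dotp_grad_continuous {G : ℝ → (Fin d → ℝ) → ℝ}
    (hpC : ∀ i, Continuous (fun p : ℝ × (Fin d → ℝ) => pder i (G p.1) p.2))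
    {φ v : ℝ → (Fin d → ℝ)} (hφ : Continuous φ) (hv : Continuous v) :
    Continuous (fun s => dotp (gradv (G s) (φ s)) (v s)) := by
  have : (fun s => dotp (gradv (G s) (φ s)) (v s))
      = fun s => ∑ i, pder i (G s) (φ s) * v s i := rfl
  rw [this]
  refine continuous_finset_sum _ fun i _ => ?_
  exact ((hpC i).comp (continuous_id.prodMk hφ)).mul ((continuous_apply i).comp hv)

lemma smooth_ftc {G : ℝ → (Fin d → ℝ) → ℝ}
    (hDt : ∀ y, Differentiable ℝ (fun s => G s y))
    (hDtC : Continuous (fun p : ℝ × (Fin d → ℝ) => deriv (fun s => G s p.2) p.1))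
    (hDx : ∀ s, Differentiable ℝ (G s))
    (hpC : ∀ i, Continuous (fun p : ℝ × (Fin d → ℝ) => pder i (G p.1) p.2))
    (t T : ℝ) (x : Fin d → ℝ) (v : ℝ → (Fin d → ℝ)) (hv : Continuous v) :
    ∫ s in t..T, (deriv (fun r => G r (x + ∫ u in t..s, v u)) s
        + dotp (gradv (G s) (x + ∫ u in t..s, v u)) (v s))
      = G T (x + ∫ u in t..T, v u) - G t x := by
  set φ : ℝ → (Fin d → ℝ) := fun s => x + ∫ u in t..s, v u with hφdef
  have hφc : Continuous φ :=
    continuous_const.add (intervalIntegral.continuous_primitive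
      (fun a b => hv.intervalIntegrable a b) t)
  have hφd : ∀ s, HasDerivAt φ (v s) s := by
    intro s
    have := intervalIntegral.integral_hasDerivAt_right (hv.intervalIntegrable t s)
      (hv.stronglyMeasurableAtFilter volume (nhds s)) hv.continuousAt
    simpa [hφdef] using (this.const_add x)
  have hψc : Continuous (fun s => deriv (fun r => G r (φ s)) s
      + dotp (gradv (G s) (φ s)) (v s)) := by
    have h1 : Continuous (fun s => deriv (fun r => G r (φ s)) s) :=
      hDtC.comp (continuous_id.prodMk hφc)
    exact h1.add (dotp_grad_continuous hpC hφc hv)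
  have key := intervalIntegral.integral_eq_sub_of_hasDerivAt
    (f := fun s => G s (φ s))
    (f' := fun s => deriv (fun r => G r (φ s)) s + dotp (gradv (G s) (φ s)) (v s))
    (fun s _ => hasDerivAt_comp_curve hDt hDtC hDx (hφd s))
    (hψc.intervalIntegrable t T)
  have hφt : φ t = x := by simp [hφdef]
  rw [key]; beta_reduce; rw [show φ T = x + ∫ u in t..T, v u from rfl, hφt]

lemma intervalIntegrable_of_bound {t T : ℝ} (htT : t ≤ T) {f g : ℝ → ℝ}
    (hm : AEStronglyMeasurable f (volume.restrict (Ioc t T)))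
    (hg : IntervalIntegrable g volume t T)
    (hb : ∀ s ∈ Ioc t T, |f s| ≤ g s) : IntervalIntegrable f volume t T := by
  rw [intervalIntegrable_iff_integrableOn_Ioc_of_le htT]
  refine Integrable.mono' (g := g) ?_ hm ?_
  · exact (intervalIntegrable_iff_integrableOn_Ioc_of_le htT).1 hg
  · exact (ae_restrict_iff' measurableSet_Ioc).2 (Filter.Eventually.of_forall
      fun s hs => by simpa [Real.norm_eq_abs] using hb s hs)

lemma sInf_shift (S : Set EReal) (c : ℝ) :
    sInf ((fun r : EReal => r + (c : EReal)) '' S) = sInf S + (c : EReal) := by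
  apply le_antisymm
  · have h1 : sInf ((fun r : EReal => r + (c : EReal)) '' S) - (c : EReal) ≤ sInf S := by
      apply le_sInf; intro r hr
      have h2 : sInf ((fun r : EReal => r + (c : EReal)) '' S) ≤ r + c :=
        sInf_le ⟨r, hr, rfl⟩
      exact (EReal.sub_le_iff_le_add (Or.inl (EReal.coe_ne_bot c))
        (Or.inl (EReal.coe_ne_top c))).2 h2
    calc sInf ((fun r : EReal => r + (c : EReal)) '' S)
        = sInf ((fun r : EReal => r + (c : EReal)) '' S) - (c : EReal) + (c : EReal) :=
          (EReal.sub_add_cancel).symm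
      _ ≤ sInf S + (c : EReal) := add_le_add_left h1 _
  · apply le_sInf; rintro x ⟨r, hr, rfl⟩
    exact add_le_add_left (sInf_le hr) _

end Helpers

/-- The chain-rule fundamental theorem of calculus along an absolutely continuous curve. -/
lemma chain_ftc {G : ℝ → (Fin d → ℝ) → ℝ}
    (hDt : ∀ y, Differentiable ℝ (fun s => G s y))
    (hDtC : Continuous (fun p : ℝ × (Fin d → ℝ) => deriv (fun s => G s p.2) p.1))
    (hDx : ∀ s, Differentiable ℝ (G s))
    (hpC : ∀ i, Continuous (fun p : ℝ × (Fin d → ℝ) => pder i (G p.1) p.2))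
    (t T : ℝ) (htT : t ≤ T) (x : Fin d → ℝ) (u : ℝ → (Fin d → ℝ))
    (hu : IntervalIntegrable u volume t T) :
    IntervalIntegrable (fun s => deriv (fun r => G r (x + ∫ w in t..s, u w)) s
        + dotp (gradv (G s) (x + ∫ w in t..s, u w)) (u s)) volume t T ∧
    (∫ s in t..T, (deriv (fun r => G r (x + ∫ w in t..s, u w)) s
        + dotp (gradv (G s) (x + ∫ w in t..s, u w)) (u s))
      = G T (x + ∫ w in t..T, u w) - G t x) := by
  classical
  set φ : ℝ → (Fin d → ℝ) := fun s => x + ∫ w in t..s, u w with hφdef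
  -- continuity of φ on Icc t T
  have hφcont : ContinuousOn φ (Icc t T) := by
    have := intervalIntegral.continuousOn_primitive_interval'
      (μ := volume) (f := u) (b₁ := t) (b₂ := T) hu Set.left_mem_uIcc
    rw [Set.uIcc_of_le htT] at this
    exact continuousOn_const.add this
  -- compact sets
  have hK0 : IsCompact (φ '' Icc t T) := (isCompact_Icc).image_of_continuousOn hφcont
  set K : Set (Fin d → ℝ) := Metric.cthickening 1 (φ '' Icc t T) with hK
  have hKc : IsCompact K := hK0.cthickening
  have hφK : ∀ s ∈ Icc t T, φ s ∈ K := fun s hs =>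
    Metric.self_subset_cthickening _ (Set.mem_image_of_mem φ hs)
  set C : Set (ℝ × (Fin d → ℝ)) := (Icc t T) ×ˢ K with hC
  have hCc : IsCompact C := isCompact_Icc.prod hKc
  -- bounds
  obtain ⟨M₁, hM₁⟩ := hCc.exists_bound_of_continuousOn hDtC.continuousOn
  have hgradc : Continuous (fun p : ℝ × (Fin d → ℝ) => gradv (G p.1) p.2) :=
    continuous_pi fun i => hpC i
  obtain ⟨Mg, hMg⟩ := hCc.exists_bound_of_continuousOn hgradc.continuousOn
  have htmem : (t, φ t) ∈ C := ⟨⟨le_refl t, htT⟩, hφK t ⟨le_refl t, htT⟩⟩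
  have hMgnn : 0 ≤ Mg := le_trans (norm_nonneg _) (hMg _ htmem)
  -- integrability of u on Icc, extension by zero
  have huIoc : IntegrableOn u (Ioc t T) volume :=
    (intervalIntegrable_iff_integrableOn_Ioc_of_le htT).1 hu
  have huIcc : IntegrableOn u (Icc t T) volume :=
    (integrableOn_Icc_iff_integrableOn_Ioc (by simp)).2 huIoc
  set U : ℝ → (Fin d → ℝ) := (Icc t T).indicator u with hU
  have hUint : Integrable U volume := huIcc.integrable_indicator measurableSet_Icc
  -- choose continuous approximations
  have hex : ∀ n : ℕ, ∃ v : ℝ → (Fin d → ℝ), Continuous v ∧ Integrable v volume ∧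
      (∫ r, ‖U r - v r‖) ≤ 1 / (n + 1) := by
    intro n
    obtain ⟨g, -, hg2, hg3, hg4⟩ := hUint.exists_hasCompactSupport_integral_sub_le
      (ε := 1 / (n + 1)) (by positivity)
    exact ⟨g, hg3, hg4, hg2⟩
  choose v hvc hvint hvclose using hex
  -- L¹ distance bound on subintervals
  have hL1 : ∀ n : ℕ, ∀ s ∈ Icc t T, (∫ r in t..s, ‖v n r - u r‖) ≤ 1 / (n + 1) := by
    intro n s hs
    have hts : t ≤ s := hs.1
    have hsub : Ioc t s ⊆ Icc t T := fun r hr => ⟨le_of_lt hr.1, le_trans hr.2 hs.2⟩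
    rw [intervalIntegral.integral_of_le hts]
    have heq : ∀ r ∈ Ioc t s, ‖v n r - u r‖ = ‖U r - v n r‖ := by
      intro r hr
      rw [hU, Set.indicator_of_mem (hsub hr), norm_sub_rev]
    calc (∫ r in Ioc t s, ‖v n r - u r‖) = ∫ r in Ioc t s, ‖U r - v n r‖ := by
          apply setIntegral_congr_fun measurableSet_Ioc
          intro r hr; exact heq r hr
      _ ≤ ∫ r, ‖U r - v n r‖ := by
          apply setIntegral_le_integral ((hUint.sub (hvint n)).norm)
          exact Filter.Eventually.of_forall fun r => norm_nonneg _
      _ ≤ 1 / (n + 1) := hvclose n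
  -- approximating curves
  set φn : ℕ → ℝ → (Fin d → ℝ) := fun n s => x + ∫ w in t..s, v n w with hφn
  have hclose : ∀ n : ℕ, ∀ s ∈ Icc t T, ‖φn n s - φ s‖ ≤ 1 / (n + 1) := by
    intro n s hs
    have hts : t ≤ s := hs.1
    have hss : Set.uIcc t s ⊆ Set.uIcc t T := by
      rw [Set.uIcc_of_le hts, Set.uIcc_of_le htT]
      exact Set.Icc_subset_Icc le_rfl hs.2
    have huts : IntervalIntegrable u volume t s := hu.mono_set hss
    have : φn n s - φ s = ∫ w in t..s, (v n w - u w) := by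
      rw [hφn, hφdef]
      simp only [add_sub_add_left_eq_sub]
      rw [intervalIntegral.integral_sub ((hvc n).intervalIntegrable t s) huts]
    rw [this]
    calc ‖∫ w in t..s, (v n w - u w)‖ ≤ ∫ w in t..s, ‖v n w - u w‖ :=
          intervalIntegral.norm_integral_le_integral_norm hts
      _ ≤ 1 / (n + 1) := hL1 n s hs
  have hn1 : ∀ n : ℕ, (0:ℝ) < 1 / (n + 1) := fun n => by positivity
  have hn1le : ∀ n : ℕ, (1:ℝ) / (n + 1) ≤ 1 := fun n => by
    rw [div_le_one (by positivity)]; linarith [Nat.cast_nonneg (α := ℝ) n]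
  have hφnK : ∀ n : ℕ, ∀ s ∈ Icc t T, φn n s ∈ K := by
    intro n s hs
    refine Metric.mem_cthickening_of_dist_le (φn n s) (φ s) 1 _ (Set.mem_image_of_mem φ hs) ?_
    rw [dist_eq_norm]
    exact le_trans (hclose n s hs) (hn1le n)
  have htendsΦ : ∀ s ∈ Icc t T, Tendsto (fun n => φn n s) atTop (𝓝 (φ s)) := by
    intro s hs
    rw [tendsto_iff_dist_tendsto_zero]
    refine squeeze_zero (fun n => dist_nonneg) (fun n => ?_)
      tendsto_one_div_add_atTop_nhds_zero_nat
    rw [dist_eq_norm]; exact hclose n s hs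
  have hφncont : ∀ n, Continuous (φn n) := fun n =>
    continuous_const.add (intervalIntegral.continuous_primitive
      (fun a b => (hvc n).intervalIntegrable a b) t)
  -- the smooth FTC for each n
  have hsm : ∀ n : ℕ, (∫ s in t..T, (deriv (fun r => G r (φn n s)) s
      + dotp (gradv (G s) (φn n s)) (v n s))) = G T (φn n T) - G t x := by
    intro n
    exact smooth_ftc hDt hDtC hDx hpC t T x (v n) (hvc n)
  -- names for the various integrands
  set A : ℝ → ℝ := fun s => deriv (fun r => G r (φ s)) s with hA
  set An : ℕ → ℝ → ℝ := fun n s => deriv (fun r => G r (φn n s)) s with hAn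
  set C₀ : ℝ → ℝ := fun s => dotp (gradv (G s) (φ s)) (u s) with hC₀
  set Cn : ℕ → ℝ → ℝ := fun n s => dotp (gradv (G s) (φn n s)) (u s) with hCn
  set Bn : ℕ → ℝ → ℝ := fun n s => dotp (gradv (G s) (φn n s)) (v n s - u s) with hBn
  set Dn : ℕ → ℝ → ℝ := fun n s => dotp (gradv (G s) (φn n s)) (v n s) with hDn
  have hAncont : ∀ n, Continuous (An n) := fun n =>
    hDtC.comp (continuous_id.prodMk (hφncont n))
  have hDncont : ∀ n, Continuous (Dn n) := fun n =>
    dotp_grad_continuous hpC (hφncont n) (hvc n)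
  have huAESM : AEStronglyMeasurable u (volume.restrict (Ioc t T)) :=
    huIoc.aestronglyMeasurable
  have hIoc_sub : Ioc t T ⊆ Icc t T := Set.Ioc_subset_Icc_self
  -- measurability of dot products with u
  have haesm : ∀ (g : ℝ → (Fin d → ℝ)), ContinuousOn g (Ioc t T) →
      AEStronglyMeasurable (fun s => dotp (g s) (u s)) (volume.restrict (Ioc t T)) := by
    intro g hg
    have : (fun s => dotp (g s) (u s)) = fun s => ∑ i, g s i * u s i := rfl
    rw [this]
    refine Finset.aestronglyMeasurable_fun_sum _ fun i _ => ?_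
    refine AEStronglyMeasurable.mul ?_ ?_
    · exact ((continuous_apply i).comp_continuousOn hg).aestronglyMeasurable measurableSet_Ioc
    · exact (continuous_apply i).comp_aestronglyMeasurable huAESM
  have hgradn : ∀ n, Continuous (fun s => gradv (G s) (φn n s)) := fun n =>
    hgradc.comp (continuous_id.prodMk (hφncont n))
  have hgradOn : ContinuousOn (fun s => gradv (G s) (φ s)) (Ioc t T) :=
    hgradc.comp_continuousOn ((continuousOn_id.prodMk (hφcont.mono hIoc_sub)))
  -- integrability of Cn and C₀
  have hCbound : ∀ (g : ℝ → (Fin d → ℝ)), (∀ s ∈ Icc t T, ‖g s‖ ≤ Mg) →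
      ∀ s ∈ Ioc t T, |dotp (g s) (u s)| ≤ (d * Mg) * ‖u s‖ := by
    intro g hg s hs
    calc |dotp (g s) (u s)| ≤ d * ‖g s‖ * ‖u s‖ := abs_dotp_le _ _
      _ ≤ d * Mg * ‖u s‖ := by
          have h1 := hg s (hIoc_sub hs)
          have hd : (0:ℝ) ≤ d := Nat.cast_nonneg _
          exact mul_le_mul_of_nonneg_right (mul_le_mul_of_nonneg_left h1 hd) (norm_nonneg _)
  have hbint : IntervalIntegrable (fun s => (d * Mg) * ‖u s‖) volume t T :=
    (hu.norm).const_mul _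
  have hCnint : ∀ n, IntervalIntegrable (Cn n) volume t T := by
    intro n
    refine intervalIntegrable_of_bound htT (haesm _ (hgradn n).continuousOn) hbint ?_
    exact hCbound _ (fun s hs => hMg (s, φn n s) ⟨hs, hφnK n s hs⟩)
  have hC₀int : IntervalIntegrable C₀ volume t T := by
    refine intervalIntegrable_of_bound htT (haesm _ hgradOn) hbint ?_
    exact hCbound _ (fun s hs => hMg (s, φ s) ⟨hs, hφK s hs⟩)
  have hAint : IntervalIntegrable A volume t T := by
    refine intervalIntegrable_of_bound htT ?_ (_root_.intervalIntegrable_const (c := M₁)) ?_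
    · exact (hDtC.comp_continuousOn
        ((continuousOn_id.prodMk (hφcont.mono hIoc_sub)))).aestronglyMeasurable measurableSet_Ioc
    · intro s hs
      simpa [Real.norm_eq_abs] using hM₁ (s, φ s) ⟨hIoc_sub hs, hφK s (hIoc_sub hs)⟩
  have hBnint : ∀ n, IntervalIntegrable (Bn n) volume t T := by
    intro n
    have : Bn n = fun s => Dn n s - Cn n s := by
      funext s; rw [hBn, hDn, hCn]; exact dotp_sub_right _ _ _
    rw [this]
    exact ((hDncont n).intervalIntegrable t T).sub (hCnint n)
  -- splitting the smooth integrals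
  have hsplit : ∀ n : ℕ, (∫ s in t..T, (An n s + Dn n s))
      = (∫ s in t..T, An n s) + ((∫ s in t..T, Bn n s) + (∫ s in t..T, Cn n s)) := by
    intro n
    rw [intervalIntegral.integral_add ((hAncont n).intervalIntegrable t T)
      ((hDncont n).intervalIntegrable t T)]
    congr 1
    have : ∀ s, Dn n s = Bn n s + Cn n s := by
      intro s; rw [hBn, hDn, hCn]; simp only [dotp_sub_right]; ring
    rw [show (fun s => Dn n s) = fun s => Bn n s + Cn n s from funext this]
    exact intervalIntegral.integral_add (hBnint n) (hCnint n)
  -- convergence of the three pieces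
  have hmemΙ : ∀ s ∈ Set.uIoc t T, s ∈ Icc t T := by
    intro s hs
    rw [Set.uIoc_of_le htT] at hs
    exact hIoc_sub hs
  have T1 : Tendsto (fun n => ∫ s in t..T, An n s) atTop (𝓝 (∫ s in t..T, A s)) := by
    refine intervalIntegral.tendsto_integral_filter_of_dominated_convergence
      (fun _ => M₁) (Filter.Eventually.of_forall fun n => (hAncont n).aestronglyMeasurable)
      (Filter.Eventually.of_forall fun n => Filter.Eventually.of_forall fun s hs => ?_)
      intervalIntegrable_const (Filter.Eventually.of_forall fun s hs => ?_)
    · exact hM₁ (s, φn n s) ⟨hmemΙ s hs, hφnK n s (hmemΙ s hs)⟩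
    · exact (hDtC.tendsto (s, φ s)).comp
        (tendsto_const_nhds.prodMk_nhds (htendsΦ s (hmemΙ s hs)))
  have T3 : Tendsto (fun n => ∫ s in t..T, Cn n s) atTop (𝓝 (∫ s in t..T, C₀ s)) := by
    refine intervalIntegral.tendsto_integral_filter_of_dominated_convergence
      (fun s => (d * Mg) * ‖u s‖)
      (Filter.Eventually.of_forall fun n => ?_)
      (Filter.Eventually.of_forall fun n => ?_)
      hbint (Filter.Eventually.of_forall fun s hs => ?_)
    · rw [show (volume.restrict (Set.uIoc t T)) = volume.restrict (Ioc t T) by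
        rw [Set.uIoc_of_le htT]]
      exact haesm _ (hgradn n).continuousOn
    · refine Filter.Eventually.of_forall fun s hs => ?_
      simpa [Real.norm_eq_abs] using
        hCbound _ (fun r hr => hMg (r, φn n r) ⟨hr, hφnK n r hr⟩) s (by
          rw [← Set.uIoc_of_le htT]; exact hs)
    · have hdc : Continuous (fun z : Fin d → ℝ => dotp z (u s)) := by
        have : (fun z : Fin d → ℝ => dotp z (u s)) = fun z => ∑ i, z i * u s i := rfl
        rw [this]
        exact continuous_finset_sum _ fun i _ => (continuous_apply i).mul continuous_const
      exact (hdc.tendsto _).comp ((hgradc.tendsto (s, φ s)).comp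
        (tendsto_const_nhds.prodMk_nhds (htendsΦ s (hmemΙ s hs))))
  have T2 : Tendsto (fun n => ∫ s in t..T, Bn n s) atTop (𝓝 0) := by
    refine squeeze_zero_norm (a := fun n : ℕ => (d * Mg) * (1 / (n + 1))) (fun n => ?_) ?_
    · show ‖∫ s in t..T, Bn n s‖ ≤ (d * Mg) * (1 / (n + 1))
      have h1 : |∫ s in t..T, Bn n s| ≤ ∫ s in t..T, |Bn n s| :=
        intervalIntegral.abs_integral_le_integral_abs htT
      have h2 : (∫ s in t..T, |Bn n s|) ≤ ∫ s in t..T, (d * Mg) * ‖v n s - u s‖ := by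
        refine intervalIntegral.integral_mono_on htT ((hBnint n).abs)
          ((((hvc n).intervalIntegrable t T).sub hu).norm.const_mul _) (fun s hs => ?_)
        calc |Bn n s| ≤ d * ‖gradv (G s) (φn n s)‖ * ‖v n s - u s‖ := abs_dotp_le _ _
          _ ≤ d * Mg * ‖v n s - u s‖ := by
              have h1 := hMg (s, φn n s) ⟨hs, hφnK n s hs⟩
              have hd : (0:ℝ) ≤ d := Nat.cast_nonneg _
              exact mul_le_mul_of_nonneg_right (mul_le_mul_of_nonneg_left h1 hd) (norm_nonneg _)
      have h3 : (∫ s in t..T, (d * Mg) * ‖v n s - u s‖)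
          = (d * Mg) * ∫ s in t..T, ‖v n s - u s‖ := by
        rw [intervalIntegral.integral_const_mul]
      have h4 : (∫ s in t..T, ‖v n s - u s‖) ≤ 1 / (n + 1) := hL1 n T ⟨htT, le_rfl⟩
      rw [Real.norm_eq_abs]
      calc |∫ s in t..T, Bn n s| ≤ ∫ s in t..T, |Bn n s| := h1
        _ ≤ (d * Mg) * ∫ s in t..T, ‖v n s - u s‖ := by rw [← h3]; exact h2
        _ ≤ (d * Mg) * (1 / (n + 1)) := by
            refine mul_le_mul_of_nonneg_left h4 (by positivity)
    · have := tendsto_one_div_add_atTop_nhds_zero_nat.const_mul (d * Mg)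
      simpa using this
  -- limit of the right-hand sides
  have TR : Tendsto (fun n => G T (φn n T) - G t x) atTop (𝓝 (G T (φ T) - G t x)) := by
    have : Tendsto (fun n => φn n T) atTop (𝓝 (φ T)) := htendsΦ T ⟨htT, le_rfl⟩
    exact (((hDx T).continuous.tendsto _).comp this).sub_const _
  -- identify the limit
  have TL : Tendsto (fun n => G T (φn n T) - G t x) atTop
      (𝓝 ((∫ s in t..T, A s) + (0 + ∫ s in t..T, C₀ s))) := by
    have : (fun n => G T (φn n T) - G t x)
        = fun n => (∫ s in t..T, An n s) + ((∫ s in t..T, Bn n s) + (∫ s in t..T, Cn n s)) := by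
      funext n
      rw [← hsplit n, ← hsm n]
    rw [this]
    exact T1.add (T2.add T3)
  have hlim := tendsto_nhds_unique TL TR
  have hfinal : (∫ s in t..T, (A s + C₀ s)) = G T (φ T) - G t x := by
    rw [intervalIntegral.integral_add hAint hC₀int]
    rw [← hlim]; ring
  exact ⟨hAint.add hC₀int, hfinal⟩

/-- For the control `ū = -σᵀ∇G` built from an exact classical solution
`G` of the HJB equation, the importance sampling cost of every admissible path equals
`S_{tT}(φ) + h(φ(T)) + G(t,x)`; consequently, if `G(t,x)` is the infimum of
`S_{tT}(φ) + h(φ(T))`, the infimum of the left-hand side equals `2G(t,x)`. -/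
theorem stmt_8 (d : ℕ) (T : ℝ) (hT : 0 < T) (t : ℝ) (x : Fin d → ℝ)
    (ht : 0 ≤ t) (htT : t ≤ T)
    (b : (Fin d → ℝ) → (Fin d → ℝ))
    (σ : (Fin d → ℝ) → Matrix (Fin d) (Fin d) ℝ)
    (h : (Fin d → ℝ) → ℝ)
    (hbC : Continuous b) (hσC : Continuous σ)
    (haPD : ∀ y, (σ y * (σ y)ᵀ).PosDef)
    (G : ℝ → (Fin d → ℝ) → ℝ)
    (hGreg : C1 G)
    (hGpde : ∀ s y, 0 ≤ s → s < T →
      deriv (fun r => G r y) s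
        + dotp (b y) (gradv (G s) y)
        - (1 / 2) * dotp ((σ y)ᵀ *ᵥ gradv (G s) y) ((σ y)ᵀ *ᵥ gradv (G s) y) = 0)
    (hGT : ∀ y, G T y = h y)
    (ubar : ℝ → (Fin d → ℝ) → (Fin d → ℝ))
    (hubar : ∀ s y, ubar s y = -((σ y)ᵀ *ᵥ gradv (G s) y)) :
    (∀ φ φ' : ℝ → (Fin d → ℝ),
      φ t = x →
      (∀ s ∈ Set.Icc t T, φ s = x + ∫ u in t..s, φ' u) →
      IntervalIntegrable φ' MeasureTheory.volume t T →
      IntervalIntegrable (fun s => dotp (φ' s) (φ' s)) MeasureTheory.volume t T →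
      (∫ s in t..T,
        ((1 / 2) * dotp (φ' s - (b (φ s) - (σ (φ s)) *ᵥ (ubar s (φ s))))
            ((σ (φ s) * (σ (φ s))ᵀ)⁻¹
              *ᵥ (φ' s - (b (φ s) - (σ (φ s)) *ᵥ (ubar s (φ s)))))
          - dotp (ubar s (φ s)) (ubar s (φ s))))
        + 2 * h (φ T)
      = (∫ s in t..T,
          (1 / 2) * dotp (φ' s - b (φ s))
            ((σ (φ s) * (σ (φ s))ᵀ)⁻¹ *ᵥ (φ' s - b (φ s))))
        + h (φ T) + G t x)
    ∧
    (((G t x : ℝ) : EReal) =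
        sInf {r : EReal | ∃ φ φ' : ℝ → (Fin d → ℝ),
          φ t = x ∧
          (∀ s ∈ Set.Icc t T, φ s = x + ∫ u in t..s, φ' u) ∧
          IntervalIntegrable φ' MeasureTheory.volume t T ∧
          IntervalIntegrable (fun s => dotp (φ' s) (φ' s)) MeasureTheory.volume t T ∧
          r = (((∫ s in t..T,
              (1 / 2) * dotp (φ' s - b (φ s))
                ((σ (φ s) * (σ (φ s))ᵀ)⁻¹ *ᵥ (φ' s - b (φ s))))
            + h (φ T) : ℝ) : EReal)} →
      sInf {r : EReal | ∃ φ φ' : ℝ → (Fin d → ℝ),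
          φ t = x ∧
          (∀ s ∈ Set.Icc t T, φ s = x + ∫ u in t..s, φ' u) ∧
          IntervalIntegrable φ' MeasureTheory.volume t T ∧
          IntervalIntegrable (fun s => dotp (φ' s) (φ' s)) MeasureTheory.volume t T ∧
          r = (((∫ s in t..T,
              ((1 / 2) * dotp (φ' s - (b (φ s) - (σ (φ s)) *ᵥ (ubar s (φ s))))
                  ((σ (φ s) * (σ (φ s))ᵀ)⁻¹
                    *ᵥ (φ' s - (b (φ s) - (σ (φ s)) *ᵥ (ubar s (φ s)))))
                - dotp (ubar s (φ s)) (ubar s (φ s))))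
            + 2 * h (φ T) : ℝ) : EReal)}
        = ((2 * G t x : ℝ) : EReal)) := by
  classical
  obtain ⟨hGc, hDt, hDtC, hDx, hpC⟩ := hGreg
  have hIocIcc : Ioc t T ⊆ Icc t T := Set.Ioc_subset_Icc_self
  -- Part 1
  have part1 : ∀ φ φ' : ℝ → (Fin d → ℝ),
      φ t = x →
      (∀ s ∈ Set.Icc t T, φ s = x + ∫ u in t..s, φ' u) →
      IntervalIntegrable φ' MeasureTheory.volume t T →
      IntervalIntegrable (fun s => dotp (φ' s) (φ' s)) MeasureTheory.volume t T →
      (∫ s in t..T,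
        ((1 / 2) * dotp (φ' s - (b (φ s) - (σ (φ s)) *ᵥ (ubar s (φ s))))
            ((σ (φ s) * (σ (φ s))ᵀ)⁻¹
              *ᵥ (φ' s - (b (φ s) - (σ (φ s)) *ᵥ (ubar s (φ s)))))
          - dotp (ubar s (φ s)) (ubar s (φ s))))
        + 2 * h (φ T)
      = (∫ s in t..T,
          (1 / 2) * dotp (φ' s - b (φ s))
            ((σ (φ s) * (σ (φ s))ᵀ)⁻¹ *ᵥ (φ' s - b (φ s))))
        + h (φ T) + G t x := by
    intro φ φ' hφt hφeq hφ'int hφ'sq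
    set φ₀ : ℝ → (Fin d → ℝ) := fun s => x + ∫ w in t..s, φ' w with hφ₀def
    have hφeqOn : Set.EqOn φ φ₀ (Icc t T) := fun s hs => hφeq s hs
    obtain ⟨hψ₀int, hFTC⟩ := chain_ftc hDt hDtC hDx hpC t T htT x φ' hφ'int
    have hTmem : T ∈ Icc t T := ⟨htT, le_rfl⟩
    have hφT : φ T = φ₀ T := hφeqOn hTmem
    set ψ : ℝ → ℝ := fun s => deriv (fun r => G r (φ s)) s
        + dotp (gradv (G s) (φ s)) (φ' s) with hψdef
    set ψ₀ : ℝ → ℝ := fun s => deriv (fun r => G r (φ₀ s)) s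
        + dotp (gradv (G s) (φ₀ s)) (φ' s) with hψ₀def
    have hψcongr : Set.EqOn ψ₀ ψ (Icc t T) := by
      intro s hs
      rw [hψdef, hψ₀def]
      simp only []
      rw [hφeqOn hs]
    have hψ₀int' : IntervalIntegrable ψ₀ volume t T := hψ₀int
    have hψint : IntervalIntegrable ψ volume t T := by
      rw [intervalIntegrable_iff_integrableOn_Ioc_of_le htT] at hψ₀int' ⊢
      exact hψ₀int'.congr_fun (fun s hs => hψcongr (hIocIcc hs)) measurableSet_Ioc
    have hψFTC : (∫ s in t..T, ψ s) = h (φ T) - G t x := by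
      have h1 : (∫ s in t..T, ψ s) = ∫ s in t..T, ψ₀ s := by
        apply intervalIntegral.integral_congr
        rw [Set.uIcc_of_le htT]
        exact fun s hs => (hψcongr hs).symm
      rw [h1]
      have h2 : (∫ s in t..T, ψ₀ s) = G T (φ₀ T) - G t x := hFTC
      rw [h2, ← hφT, hGT]
    -- continuity of φ on Icc
    have hφ₀cont : ContinuousOn φ₀ (Icc t T) := by
      have := intervalIntegral.continuousOn_primitive_interval'
        (μ := volume) (f := φ') (b₁ := t) (b₂ := T) hφ'int Set.left_mem_uIcc
      rw [Set.uIcc_of_le htT] at this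
      exact continuousOn_const.add this
    have hφcont : ContinuousOn φ (Icc t T) := hφ₀cont.congr hφeqOn
    -- the inverse diffusion matrix, continuous
    have hacont : Continuous (fun y => σ y * (σ y)ᵀ) := hσC.matrix_mul hσC.matrix_transpose
    have hNcont : Continuous (fun y => (σ y * (σ y)ᵀ)⁻¹) := by
      have hdet : Continuous (fun y => (σ y * (σ y)ᵀ).det) := hacont.matrix_det
      have hadj : Continuous (fun y => (σ y * (σ y)ᵀ).adjugate) := hacont.matrix_adjugate
      have hinv : Continuous (fun y => ((σ y * (σ y)ᵀ).det)⁻¹) :=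
        hdet.inv₀ (fun y => ne_of_gt (haPD y).det_pos)
      have := hinv.smul hadj
      convert this using 1
      funext y
      rw [Matrix.inv_def, Ring.inverse_eq_inv']
      rfl
    -- bounds on Icc
    have hmcont : ContinuousOn (fun s => ∑ i, ∑ j, |(σ (φ s) * (σ (φ s))ᵀ)⁻¹ i j|)
        (Icc t T) := by
      refine continuousOn_finset_sum _ fun i _ => continuousOn_finset_sum _ fun j _ => ?_
      exact ((hNcont.matrix_elem i j).comp_continuousOn hφcont).abs
    obtain ⟨MN, hMN⟩ := isCompact_Icc.exists_bound_of_continuousOn hmcont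
    obtain ⟨Mb, hMb⟩ := isCompact_Icc.exists_bound_of_continuousOn
      (hbC.comp_continuousOn hφcont)
    have hMb' : ∀ s ∈ Icc t T, ‖b (φ s)‖ ≤ Mb := by
      intro s hs; simpa using hMb s hs
    have hMbnn : 0 ≤ Mb := le_trans (norm_nonneg _) (hMb' t ⟨le_rfl, htT⟩)
    have hMN' : ∀ s ∈ Icc t T, (∑ i, ∑ j, |(σ (φ s) * (σ (φ s))ᵀ)⁻¹ i j|) ≤ MN := by
      intro s hs
      have := hMN s hs
      rwa [Real.norm_eq_abs, abs_of_nonneg (Finset.sum_nonneg fun i _ =>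
        Finset.sum_nonneg fun j _ => abs_nonneg _)] at this
    have hMNnn : 0 ≤ MN :=
      le_trans (Finset.sum_nonneg fun i _ => Finset.sum_nonneg fun j _ => abs_nonneg _)
        (hMN' t ⟨le_rfl, htT⟩)
    -- integrability of L2
    set L2 : ℝ → ℝ := fun s => (1 / 2) * dotp (φ' s - b (φ s))
        ((σ (φ s) * (σ (φ s))ᵀ)⁻¹ *ᵥ (φ' s - b (φ s))) with hL2def
    have hφ'aesm : AEStronglyMeasurable φ' (volume.restrict (Ioc t T)) :=
      ((intervalIntegrable_iff_integrableOn_Ioc_of_le htT).1 hφ'int).aestronglyMeasurable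
    have hwaesm : ∀ i : Fin d, AEStronglyMeasurable (fun s => (φ' s - b (φ s)) i)
        (volume.restrict (Ioc t T)) := by
      intro i
      refine AEStronglyMeasurable.sub ?_ ?_
      · exact (continuous_apply i).comp_aestronglyMeasurable hφ'aesm
      · exact (((continuous_apply i).comp hbC).comp_continuousOn
          (hφcont.mono hIocIcc)).aestronglyMeasurable measurableSet_Ioc
    have hNaesm : ∀ i j : Fin d, AEStronglyMeasurable
        (fun s => (σ (φ s) * (σ (φ s))ᵀ)⁻¹ i j) (volume.restrict (Ioc t T)) := by
      intro i j
      exact ((hNcont.matrix_elem i j).comp_continuousOn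
        (hφcont.mono hIocIcc)).aestronglyMeasurable measurableSet_Ioc
    have hL2aesm : AEStronglyMeasurable L2 (volume.restrict (Ioc t T)) := by
      have : L2 = fun s => (1 / 2) * ∑ i, (φ' s - b (φ s)) i *
          ∑ j, (σ (φ s) * (σ (φ s))ᵀ)⁻¹ i j * (φ' s - b (φ s)) j := rfl
      rw [this]
      refine AEStronglyMeasurable.const_mul ?_ _
      refine Finset.aestronglyMeasurable_fun_sum _ fun i _ => ?_
      refine (hwaesm i).mul ?_
      exact Finset.aestronglyMeasurable_fun_sum _ fun j _ => (hNaesm i j).mul (hwaesm j)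
    have hL2bound : ∀ s ∈ Ioc t T, |L2 s|
        ≤ MN * dotp (φ' s) (φ' s) + MN * Mb ^ 2 := by
      intro s hs
      have hsIcc : s ∈ Icc t T := hIocIcc hs
      set w : Fin d → ℝ := φ' s - b (φ s) with hwdef
      have h1 : |dotp w ((σ (φ s) * (σ (φ s))ᵀ)⁻¹ *ᵥ w)|
          ≤ (∑ i, ∑ j, |(σ (φ s) * (σ (φ s))ᵀ)⁻¹ i j|) * ‖w‖ ^ 2 :=
        abs_dotp_mulVec_le _ _
      have h2 : ‖w‖ ≤ ‖φ' s‖ + Mb :=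
        le_trans (norm_sub_le _ _) (by linarith [hMb' s hsIcc])
      have h3 : ‖φ' s‖ ^ 2 ≤ dotp (φ' s) (φ' s) := sq_norm_le_dotp _
      have h2' : ‖w‖ ^ 2 ≤ (‖φ' s‖ + Mb) ^ 2 := pow_le_pow_left₀ (norm_nonneg w) h2 2
      have h4 : ‖w‖ ^ 2 ≤ 2 * dotp (φ' s) (φ' s) + 2 * Mb ^ 2 := by
        nlinarith [sq_nonneg (‖φ' s‖ - Mb), h2', h3]
      have h5 := hMN' s hsIcc
      have h6 : (0:ℝ) ≤ ∑ i, ∑ j, |(σ (φ s) * (σ (φ s))ᵀ)⁻¹ i j| :=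
        Finset.sum_nonneg fun i _ => Finset.sum_nonneg fun j _ => abs_nonneg _
      have h7 : |L2 s| = (1/2) * |dotp w ((σ (φ s) * (σ (φ s))ᵀ)⁻¹ *ᵥ w)| := by
        rw [hL2def]
        simp only []
        rw [abs_mul]
        norm_num
        rfl
      rw [h7]
      have h8 : (∑ i, ∑ j, |(σ (φ s) * (σ (φ s))ᵀ)⁻¹ i j|) * ‖w‖ ^ 2
          ≤ MN * (2 * dotp (φ' s) (φ' s) + 2 * Mb ^ 2) := by
        have h9 : (0:ℝ) ≤ ‖w‖ ^ 2 := sq_nonneg _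
        nlinarith [dotp_nonneg_self (φ' s)]
      nlinarith
    have hL2int : IntervalIntegrable L2 volume t T := by
      refine intervalIntegrable_of_bound htT hL2aesm ?_ hL2bound
      exact (hφ'sq.const_mul MN).add (_root_.intervalIntegrable_const)
    -- the pointwise identity
    set L1 : ℝ → ℝ := fun s =>
      (1 / 2) * dotp (φ' s - (b (φ s) - (σ (φ s)) *ᵥ (ubar s (φ s))))
          ((σ (φ s) * (σ (φ s))ᵀ)⁻¹
            *ᵥ (φ' s - (b (φ s) - (σ (φ s)) *ᵥ (ubar s (φ s)))))
        - dotp (ubar s (φ s)) (ubar s (φ s)) with hL1def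
    have hae : ∀ᵐ s : ℝ, s ∈ Set.uIoc t T → L1 s = L2 s - ψ s := by
      have hT0 : ∀ᵐ s : ℝ, s ∉ ({T} : Set ℝ) :=
        measure_eq_zero_iff_ae_notMem.mp Real.volume_singleton
      filter_upwards [hT0] with s hsne hs
      rw [Set.uIoc_of_le htT] at hs
      have hs0 : 0 ≤ s := le_trans ht (le_of_lt hs.1)
      have hsT : s < T := lt_of_le_of_ne hs.2 (fun hc => hsne (by simp [hc]))
      set y := φ s with hydef
      set A := σ y with hAdef
      set pp := gradv (G s) y with hppdef
      have hub : ubar s y = -(Aᵀ *ᵥ pp) := hubar s y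
      have hσu : A *ᵥ (ubar s y) = -((A * Aᵀ) *ᵥ pp) := by
        rw [hub, Matrix.mulVec_neg, Matrix.mulVec_mulVec]
      have hvec : φ' s - (b y - A *ᵥ (ubar s y))
          = (φ' s - b y) - (A * Aᵀ) *ᵥ pp := by
        rw [hσu]
        abel
      have huu : dotp (ubar s y) (ubar s y) = dotp (Aᵀ *ᵥ pp) (Aᵀ *ᵥ pp) := by
        rw [hub, dotp_neg_neg]
      have hka := key_alg A (haPD y) pp (φ' s - b y)
      have hpde := hGpde s y hs0 hsT
      rw [hL1def, hL2def, hψdef]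
      simp only []
      rw [hvec, huu, hka]
      have hsplit : dotp (φ' s - b y) pp = dotp (φ' s) pp - dotp (b y) pp :=
        dotp_sub_left _ _ _
      have hcp : dotp pp (φ' s) = dotp (φ' s) pp := dotp_comm _ _
      have hcb : dotp (b y) (gradv (G s) y) = dotp (b y) pp := rfl
      rw [hcb] at hpde
      linarith [hpde, hsplit, hcp]
    have hIcongr : (∫ s in t..T, L1 s) = ∫ s in t..T, (L2 s - ψ s) :=
      intervalIntegral.integral_congr_ae hae
    have hIsub : (∫ s in t..T, (L2 s - ψ s)) = (∫ s in t..T, L2 s) - ∫ s in t..T, ψ s :=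
      intervalIntegral.integral_sub hL2int hψint
    show (∫ s in t..T, L1 s) + 2 * h (φ T) = (∫ s in t..T, L2 s) + h (φ T) + G t x
    rw [hIcongr, hIsub, hψFTC]
    ring
  refine ⟨part1, ?_⟩
  intro hinf
  have hSL : {r : EReal | ∃ φ φ' : ℝ → (Fin d → ℝ),
          φ t = x ∧
          (∀ s ∈ Set.Icc t T, φ s = x + ∫ u in t..s, φ' u) ∧
          IntervalIntegrable φ' MeasureTheory.volume t T ∧
          IntervalIntegrable (fun s => dotp (φ' s) (φ' s)) MeasureTheory.volume t T ∧
          r = (((∫ s in t..T,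
              ((1 / 2) * dotp (φ' s - (b (φ s) - (σ (φ s)) *ᵥ (ubar s (φ s))))
                  ((σ (φ s) * (σ (φ s))ᵀ)⁻¹
                    *ᵥ (φ' s - (b (φ s) - (σ (φ s)) *ᵥ (ubar s (φ s)))))
                - dotp (ubar s (φ s)) (ubar s (φ s))))
            + 2 * h (φ T) : ℝ) : EReal)}
      = (fun r : EReal => r + ((G t x : ℝ) : EReal)) ''
        {r : EReal | ∃ φ φ' : ℝ → (Fin d → ℝ),
          φ t = x ∧
          (∀ s ∈ Set.Icc t T, φ s = x + ∫ u in t..s, φ' u) ∧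
          IntervalIntegrable φ' MeasureTheory.volume t T ∧
          IntervalIntegrable (fun s => dotp (φ' s) (φ' s)) MeasureTheory.volume t T ∧
          r = (((∫ s in t..T,
              (1 / 2) * dotp (φ' s - b (φ s))
                ((σ (φ s) * (σ (φ s))ᵀ)⁻¹ *ᵥ (φ' s - b (φ s))))
            + h (φ T) : ℝ) : EReal)} := by
    ext r
    constructor
    · rintro ⟨φ, φ', h1, h2, h3, h4, h5⟩
      refine ⟨(((∫ s in t..T,
          (1 / 2) * dotp (φ' s - b (φ s))
            ((σ (φ s) * (σ (φ s))ᵀ)⁻¹ *ᵥ (φ' s - b (φ s))))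
          + h (φ T) : ℝ) : EReal), ⟨φ, φ', h1, h2, h3, h4, rfl⟩, ?_⟩
      dsimp only
      rw [h5, ← EReal.coe_add]
      exact congrArg Real.toEReal (by linarith [part1 φ φ' h1 h2 h3 h4])
    · rintro ⟨-, ⟨φ, φ', h1, h2, h3, h4, rfl⟩, rfl⟩
      refine ⟨φ, φ', h1, h2, h3, h4, ?_⟩
      dsimp only
      rw [← EReal.coe_add]
      exact congrArg Real.toEReal (by linarith [part1 φ φ' h1 h2 h3 h4])
  rw [hSL, sInf_shift, ← hinf, ← EReal.coe_add]
  exact congrArg Real.toEReal (by ring)
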